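/- Let A, B be self-adjoint matrices with 0 < A ≤ B (Loewner order) and m·I ≤ A ≤ M·I for scalars 0 < m ≤ M. Then A² ≤ ((M+m)²/(4Mm))·B². -/

import Mathlib

open Matrix

private lemma psd_smul' {n : Type*} [Fintype n] {c : ℝ} (hc : 0 ≤ c)
    {X : Matrix n n ℝ} (hX : X.PosSemidef) : (c • X).PosSemidef := by
  refine ⟨?_, fun x => ?_⟩
  · unfold Matrix.IsHermitian
    rw [conjTranspose_smul, hX.1.eq]
    simp
  · exact (hX.smul hc).2 x

private lemma psd_prod' {n : Type*} [Fintype n] [DecidableEq n] (m M : ℝ)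
    (A : Matrix n n ℝ) (hA : A.IsHermitian)
    (hmA : (A - m • (1 : Matrix n n ℝ)).PosSemidef)
    (hAM : (M • (1 : Matrix n n ℝ) - A).PosSemidef) :
    ((M • (1 : Matrix n n ℝ) - A) * (A - m • (1 : Matrix n n ℝ))).PosSemidef := by
  set U : Matrix n n ℝ := (hA.eigenvectorUnitary : Matrix n n ℝ) with hUdef
  have hU1 : star U * U = 1 := Unitary.coe_star_mul_self _
  have hU2 : U * star U = 1 := Unitary.coe_mul_star_self _
  set g : n → ℝ := RCLike.ofReal ∘ hA.eigenvalues with hgdef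
  have hdiag : star U * A * U = diagonal g := by
    have := hA.conjStarAlgAut_star_eigenvectorUnitary
    rwa [Unitary.conjStarAlgAut_star_apply] at this
  have hsmul : ∀ c : ℝ, star U * (c • (1 : Matrix n n ℝ)) * U = c • 1 := by
    intro c
    rw [Matrix.mul_smul, Matrix.mul_one, Matrix.smul_mul, hU1]
  have hone : ∀ c : ℝ, c • (1 : Matrix n n ℝ) = diagonal (fun _ => c) := by
    intro c
    ext i j
    by_cases h : i = j <;> simp [Matrix.diagonal_apply, h, Matrix.one_apply]
  have h1 : star U * (M • (1 : Matrix n n ℝ) - A) * U = diagonal (fun i => M - g i) := by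
    rw [Matrix.mul_sub, Matrix.sub_mul, hdiag, hsmul, hone, diagonal_sub]
  have h2 : star U * (A - m • (1 : Matrix n n ℝ)) * U = diagonal (fun i => g i - m) := by
    rw [Matrix.mul_sub, Matrix.sub_mul, hdiag, hsmul, hone, diagonal_sub]
  have p1 : (diagonal (fun i => M - g i)).PosSemidef := by
    rw [← h1, Matrix.star_eq_conjTranspose]
    exact hAM.conjTranspose_mul_mul_same U
  have p2 : (diagonal (fun i => g i - m)).PosSemidef := by
    rw [← h2, Matrix.star_eq_conjTranspose]
    exact hmA.conjTranspose_mul_mul_same U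
  have n1 : ∀ i, 0 ≤ M - g i := posSemidef_diagonal_iff.mp p1
  have n2 : ∀ i, 0 ≤ g i - m := posSemidef_diagonal_iff.mp p2
  have e1 : M • (1 : Matrix n n ℝ) - A = U * diagonal (fun i => M - g i) * star U := by
    rw [← h1]
    rw [Matrix.mul_assoc, Matrix.mul_assoc, Matrix.mul_assoc, hU2, Matrix.mul_one,
      ← Matrix.mul_assoc, hU2, Matrix.one_mul]
  have e2 : A - m • (1 : Matrix n n ℝ) = U * diagonal (fun i => g i - m) * star U := by
    rw [← h2]
    rw [Matrix.mul_assoc, Matrix.mul_assoc, Matrix.mul_assoc, hU2, Matrix.mul_one,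
      ← Matrix.mul_assoc, hU2, Matrix.one_mul]
  have assoc : ∀ D1 D2 : Matrix n n ℝ,
      (U * D1 * star U) * (U * D2 * star U) = U * (D1 * D2) * star U := by
    intro D1 D2
    calc (U * D1 * star U) * (U * D2 * star U)
        = U * (D1 * ((star U * U) * (D2 * star U))) := by simp only [Matrix.mul_assoc]
      _ = U * (D1 * D2) * star U := by rw [hU1, Matrix.one_mul]; simp only [Matrix.mul_assoc]
  have key : (M • (1 : Matrix n n ℝ) - A) * (A - m • (1 : Matrix n n ℝ))
      = U * diagonal (fun i => (M - g i) * (g i - m)) * star U := by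
    rw [e1, e2, assoc, diagonal_mul_diagonal]
  rw [key, Matrix.star_eq_conjTranspose]
  exact (PosSemidef.diagonal (fun i => mul_nonneg (n1 i) (n2 i))).mul_mul_conjTranspose_same U

theorem sq_le_of_le {n : Type*} [Fintype n] [DecidableEq n]
    (m M : ℝ) (hm : 0 < m) (hmM : m ≤ M)
    (A B : Matrix n n ℝ) (hA : A.PosDef) (hB : B.IsHermitian)
    (hAB : (B - A).PosSemidef)
    (hmA : (A - m • (1 : Matrix n n ℝ)).PosSemidef)
    (hAM : (M • (1 : Matrix n n ℝ) - A).PosSemidef) :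
    (((M + m) ^ 2 / (4 * M * m)) • (B * B) - A * A).PosSemidef := by
  have hM : 0 < M := lt_of_lt_of_le hm hmM
  have hMm : 0 < M + m := by positivity
  have hK : (0:ℝ) ≤ (M + m) ^ 2 / (4 * M * m) := by positivity
  set K : ℝ := (M + m) ^ 2 / (4 * M * m) with hKdef
  set c : ℝ := 2 * M * m / (M + m) with hcdef
  -- first summand : K • (B - c•1)^2
  have hBc : (B - c • (1 : Matrix n n ℝ)).IsHermitian := by
    unfold Matrix.IsHermitian
    rw [conjTranspose_sub, hB.eq, conjTranspose_smul, conjTranspose_one]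
    simp
  have T1 : (K • ((B - c • (1 : Matrix n n ℝ)) * (B - c • (1 : Matrix n n ℝ)))).PosSemidef := by
    apply psd_smul' hK
    have := posSemidef_conjTranspose_mul_self (B - c • (1 : Matrix n n ℝ))
    rwa [hBc.eq] at this
  have T2 : ((M + m) • (B - A)).PosSemidef := psd_smul' (le_of_lt hMm) hAB
  have T3 : ((M • (1 : Matrix n n ℝ) - A) * (A - m • (1 : Matrix n n ℝ))).PosSemidef :=
    psd_prod' m M A hA.1 hmA hAM
  have hMne : M + m ≠ 0 := ne_of_gt hMm
  have hM0 : M ≠ 0 := ne_of_gt hM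
  have hm0 : m ≠ 0 := ne_of_gt hm
  have key : K • (B * B) - A * A =
      K • ((B - c • (1 : Matrix n n ℝ)) * (B - c • (1 : Matrix n n ℝ)))
        + (M + m) • (B - A)
        + (M • (1 : Matrix n n ℝ) - A) * (A - m • (1 : Matrix n n ℝ)) := by
    rw [hKdef, hcdef]
    simp only [Matrix.sub_mul, Matrix.mul_sub, smul_mul_assoc, Matrix.mul_smul, smul_smul,
      Matrix.mul_one, Matrix.one_mul, smul_sub, smul_add]
    match_scalars <;> field_simp <;> ring
  rw [key]
  exact (T1.add T2).add T3
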